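/- arXiv:1307.7896 — 2 statements merged into one kernel-verified Lean document; each statement's English description precedes it below -/
import Mathlib

section
/- For all integers k, l ≥ 0, the coefficient operators satisfy c^+_k ∘ d^−_l = d^−_l ∘ c^+_k − d^−_{l−1} ∘ c^+_{k−1} as operators on F, where any term with a negative subscript is zero. (This is the coefficientwise form of the identity E^+_−(z)E^−_+(w) = E^−_+(w)E^+_−(z)(1 − w/z).) -/
open MvPolynomial

/-- The semi-infinite wedge space `Λ`: complex vector space with basis `v_{S,T}`
indexed by pairs `(S, T)` of finite subsets of the positive integers.  The basis
vector `v_{S,T}` encodes the semi-infinite wedge product with support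
`supp(S,T) = {-s-1/2 : s ∈ S} ∪ {-1/2} ∪ {k+1/2 : k ∈ ℤ_{≥1}, k ∉ T} ⊆ ℤ + 1/2`. -/
abbrev Wedge : Type := (Finset ℕ+ × Finset ℕ+) →₀ ℂ

/-- Image of the basis vector `v_{S,T}` under the operator `A(m)` (for `m ∈ ℤ + 1/2`,
i.e. a rational with denominator `2`; `A(m) := 0` for other rationals).
`A(m) v_{S,T} = 0` if `m ∈ supp(S,T)` or `m = 1/2`; otherwise
`A(m) v_{S,T} = (m - 1/2) ⬝ (-1)^j ⬝ v_{S',T'}` where `j = #{i ∈ supp(S,T) : i < m}`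
and `supp(S',T') = supp(S,T) ∪ {m}`.  Writing `m = n + 1/2` with `n = ⌊m⌋ ∈ ℤ`:
if `n ≥ 1` then `m ∈ supp(S,T)` iff `n ∉ T`, and the new support corresponds to
`(S, T \ {n})` with sign exponent `j = |S| + n - #{t ∈ T : t < n}`;
if `n ≤ -2` then `m = -s - 1/2` with `s = -n-1 ≥ 1`, `m ∈ supp(S,T)` iff `s ∈ S`,
and the new support corresponds to `(S ∪ {s}, T)` with `j = #{s' ∈ S : s' > s}`;
if `n = 0` (`m = 1/2`) or `n = -1` (`m = -1/2 ∈ supp(S,T)`) the result is `0`. -/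
noncomputable def Abasis (m : ℚ) (ST : Finset ℕ+ × Finset ℕ+) : Wedge :=
  if m.den = 2 then
    let n : ℤ := ⌊m⌋
    if hn : 1 ≤ n then
      let k : ℕ+ := ⟨n.toNat, by omega⟩
      if k ∈ ST.2 then
        (((n : ℂ)) * (-1) ^ (ST.1.card + n.toNat - (ST.2.filter (· < k)).card)) •
          Finsupp.single (ST.1, ST.2.erase k) (1 : ℂ)
      else 0
    else if hn' : n ≤ -2 then
      let s : ℕ+ := ⟨(-n - 1).toNat, by omega⟩
      if s ∈ ST.1 then 0
      else
        (((n : ℂ)) * (-1) ^ ((ST.1.filter (s < ·)).card)) •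
          Finsupp.single (insert s ST.1, ST.2) (1 : ℂ)
    else 0
  else 0

/-- Image of the basis vector `v_{S,T}` under the operator `A*(m)` (for `m ∈ ℤ + 1/2`).
`A*(m) v_{S,T} = 0` if `-m ∉ supp(S,T)` or `m = 1/2`; otherwise
`A*(m) v_{S,T} = (m - 1/2) ⬝ (-1)^{j'} ⬝ v_{S'',T''}` where
`j' = #{i ∈ supp(S,T) : i < -m}` and `supp(S'',T'') = supp(S,T) \ {-m}`.
Writing `m = n + 1/2`, `n = ⌊m⌋`: if `n ≥ 1` then `-m = -n - 1/2 ∈ supp(S,T)` iff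
`n ∈ S`, new pair `(S \ {n}, T)`, `j' = #{s' ∈ S : s' > n}`; if `n ≤ -2` then
`-m = k + 1/2` with `k = -n-1 ≥ 1`, `-m ∈ supp(S,T)` iff `k ∉ T`, new pair
`(S, T ∪ {k})`, `j' = |S| + k - #{t ∈ T : t < k}`; otherwise `0`. -/
noncomputable def AstarBasis (m : ℚ) (ST : Finset ℕ+ × Finset ℕ+) : Wedge :=
  if m.den = 2 then
    let n : ℤ := ⌊m⌋
    if hn : 1 ≤ n then
      let s : ℕ+ := ⟨n.toNat, by omega⟩
      if s ∈ ST.1 then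
        (((n : ℂ)) * (-1) ^ ((ST.1.filter (s < ·)).card)) •
          Finsupp.single (ST.1.erase s, ST.2) (1 : ℂ)
      else 0
    else if hn' : n ≤ -2 then
      let k : ℕ+ := ⟨(-n - 1).toNat, by omega⟩
      if k ∈ ST.2 then 0
      else
        (((n : ℂ)) * (-1) ^ (ST.1.card + (-n - 1).toNat - (ST.2.filter (· < k)).card)) •
          Finsupp.single (ST.1, insert k ST.2) (1 : ℂ)
    else 0
  else 0

/-- The operator `A(m)` on the semi-infinite wedge space `Λ`, extended linearly. -/
noncomputable def Aop (m : ℚ) : Wedge →ₗ[ℂ] Wedge :=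
  Finsupp.lsum ℂ fun ST => LinearMap.toSpanSingleton ℂ Wedge (Abasis m ST)

/-- The operator `A*(m)` on the semi-infinite wedge space `Λ`, extended linearly. -/
noncomputable def AstarOp (m : ℚ) : Wedge →ₗ[ℂ] Wedge :=
  Finsupp.lsum ℂ fun ST => LinearMap.toSpanSingleton ℂ Wedge (AstarBasis m ST)

/-- The Fock space `F = ℂ[x_1, x_2, ...]`, a polynomial ring in countably many
variables indexed by the positive integers. -/
abbrev Fock : Type := MvPolynomial ℕ+ ℂ

/-- Endomorphisms of the Fock space. -/
abbrev EndF : Type := Module.End ℂ Fock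

/-- The Heisenberg operators on the Fock space: `H(-n)` is multiplication by `x_n`
and `H(n) = -4n ∂/∂x_n` for `n ≥ 1` (and `0` for `n = 0`, which is never used). -/
noncomputable def HF (n : ℤ) : EndF :=
  if hn : 1 ≤ n then ((-4 : ℂ) * (n : ℂ)) • (pderiv (⟨n.toNat, by omega⟩ : ℕ+)).toLinearMap
  else if hn' : n ≤ -1 then LinearMap.mulLeft ℂ (X (⟨(-n).toNat, by omega⟩ : ℕ+))
  else 0

/-- `sgn true = -1`, `sgn false = 1`: the sign `∓` attached to the label `ε ∈ {+, -}`
(`ε = +` is `true`), as in `E^±_+(z) = exp(∓ Σ_{n>0} x_n z^n / (2n))`. -/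
def sgn (ε : Bool) : ℂ := if ε then -1 else 1

/-- The coefficient of `z^k` in the exponential `exp(g(z)) = Σ_j g(z)^j / j!` of an
operator-valued formal power series `g` (with zero constant term, so that only the
terms `j ≤ k` contribute to the coefficient of `z^k`). -/
noncomputable def expCoeff (g : PowerSeries EndF) (k : ℕ) : EndF :=
  ∑ j ∈ Finset.range (k + 1), ((j.factorial : ℂ))⁻¹ • (PowerSeries.coeff (R := EndF) k (g ^ j))

/-- The series `∓ Σ_{n > 0} x_n z^n / (2n)` (multiplication operators). -/
noncomputable def dSeries (ε : Bool) : PowerSeries EndF :=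
  PowerSeries.mk fun n =>
    if hn : 0 < n then sgn ε • (((2 * n : ℂ))⁻¹ • LinearMap.mulLeft ℂ (X (⟨n, hn⟩ : ℕ+)))
    else 0

/-- The series `∓ 2 Σ_{n > 0} (∂/∂x_n) w^n`, where `w` stands for `z^{-1}`. -/
noncomputable def cSeries (ε : Bool) : PowerSeries EndF :=
  PowerSeries.mk fun n =>
    if hn : 0 < n then sgn ε • ((2 : ℂ) • (pderiv (⟨n, hn⟩ : ℕ+)).toLinearMap)
    else 0

/-- `d^ε_l`, the coefficient of `z^l` in `E^ε_+(z) = exp(∓ Σ_{n>0} x_n z^n/(2n))`. -/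
noncomputable def dOp (ε : Bool) (l : ℕ) : EndF := expCoeff (dSeries ε) l

/-- `c^ε_k`, the coefficient of `z^{-k}` in `E^ε_-(z) = exp(∓ 2 Σ_{n>0} (∂/∂x_n) z^{-n})`. -/
noncomputable def cOp (ε : Bool) (k : ℕ) : EndF := expCoeff (cSeries ε) k

/-- The space `V = F ⊗ Λ ⊗ ℂ[ℤα]`, realized as finitely supported functions from
the basis `{v_{S,T} ⊗ e^{pα}}` of `Λ ⊗ ℂ[ℤα]` to the Fock space `F`:
the index `((S,T), p)` records the basis vector `v_{S,T} ⊗ e^{pα}` and the value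
is the `F`-coordinate, so `Finsupp.single ((S,T), p) f` is `f ⊗ v_{S,T} ⊗ e^{pα}`. -/
abbrev VV : Type := ((Finset ℕ+ × Finset ℕ+) × ℤ) →₀ Fock

/-- `emb w p f` is the element `f ⊗ w ⊗ e^{pα}` of `V` for `w ∈ Λ`. -/
noncomputable def emb (w : Wedge) (p : ℤ) (f : Fock) : VV :=
  w.sum fun ST c => Finsupp.single (ST, p) (c • f)

/-- The operator `X(m)` of the representation `π` on `V`:
`X(m)(f ⊗ v_{S,T} ⊗ e^{pα}) = Σ_{l,k ≥ 0} (d^+_l c^+_k f) ⊗ A(m+l-k-p-1/2) v_{S,T} ⊗ e^{(p+1)α}`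
(only finitely many summands are nonzero on each vector). -/
noncomputable def Xop (m : ℤ) : VV → VV := fun u =>
  u.sum fun STp f =>
    ∑ᶠ lk : ℕ × ℕ,
      emb (Abasis ((m : ℚ) + lk.1 - lk.2 - STp.2 - 1/2) STp.1) (STp.2 + 1)
        (dOp true lk.1 (cOp true lk.2 f))

/-- The operator `Y(m)` of the representation `π` on `V`:
`Y(m)(f ⊗ v_{S,T} ⊗ e^{pα}) = Σ_{l,k ≥ 0} (d^-_l c^-_k f) ⊗ A*(m+l-k+p-1/2) v_{S,T} ⊗ e^{(p-1)α}`. -/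
noncomputable def Yop (m : ℤ) : VV → VV := fun u =>
  u.sum fun STp f =>
    ∑ᶠ lk : ℕ × ℕ,
      emb (AstarBasis ((m : ℚ) + lk.1 - lk.2 + STp.2 - 1/2) STp.1) (STp.2 - 1)
        (dOp false lk.1 (cOp false lk.2 f))

/-- The operator `H(m)` of the representation `π` on `V`: for `m ≠ 0` it acts as
`H(m)` on the Fock factor, and `H(0)` acts on `f ⊗ v ⊗ e^{pα}` by the scalar `2p`. -/
noncomputable def HVop (m : ℤ) : VV → VV := fun u =>
  u.sum fun STp f =>
    Finsupp.single STp (if m = 0 then ((2 : ℂ) * (STp.2 : ℂ)) • f else HF m f)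

/-- The weight of a monomial `x₁^{a₁} x₂^{a₂} ⋯`, namely `Σ n aₙ`. -/
def wtMon (μ : ℕ+ →₀ ℕ) : ℚ := μ.sum fun n a => (n : ℚ) * a

/-- The degree of the basis vector `v_{S,T}` of `Λ`: `Σ_{s∈S} s + Σ_{t∈T} t`. -/
def degWedge (ST : Finset ℕ+ × Finset ℕ+) : ℚ :=
  (∑ s ∈ ST.1, (s : ℚ)) + ∑ t ∈ ST.2, (t : ℚ)

/-- The degree operator `d` of the representation `π` on `V`:
`d (f ⊗ v_{S,T} ⊗ e^{pα}) = (-wt(f) - deg(v_{S,T}) - p²/2) ⬝ (f ⊗ v_{S,T} ⊗ e^{pα})`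
on monomials `f`. -/
noncomputable def dV : VV → VV := fun u =>
  u.sum fun STp f =>
    Finsupp.single STp
      (∑ μ ∈ f.support,
        monomial μ
          ((((-(wtMon μ) - degWedge STp.1 - (STp.2 : ℚ) ^ 2 / 2 : ℚ) : ℂ)) * coeff μ f))

/-- The vacuum space `Ω = Λ ⊗ ℂ[ℤα]`, with basis `{v_{S,T} ⊗ e^{pα}}`. -/
abbrev Vac : Type := ((Finset ℕ+ × Finset ℕ+) × ℤ) →₀ ℂ

/-- `embVac w p` is the element `w ⊗ e^{pα}` of `Ω` for `w ∈ Λ`. -/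
noncomputable def embVac (w : Wedge) (p : ℤ) : Vac :=
  w.sum fun ST c => Finsupp.single (ST, p) c

/-- The operator `Z⁺(m)` on `Ω`: `Z⁺(m)(v ⊗ e^{pα}) = A(m-p-1/2)v ⊗ e^{(p+1)α}`. -/
noncomputable def Zplus (m : ℤ) : Vac → Vac := fun u =>
  u.sum fun STp c => c • embVac (Abasis ((m : ℚ) - STp.2 - 1/2) STp.1) (STp.2 + 1)

/-- The operator `Z⁻(m)` on `Ω`: `Z⁻(m)(v ⊗ e^{pα}) = A*(m+p-1/2)v ⊗ e^{(p-1)α}`. -/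
noncomputable def Zminus (m : ℤ) : Vac → Vac := fun u =>
  u.sum fun STp c => c • embVac (AstarBasis ((m : ℚ) + STp.2 - 1/2) STp.1) (STp.2 - 1)

/-- Extension to `V = F ⊗ Λ ⊗ ℂ[ℤα]` of an operator `e` on the Fock factor,
i.e. `e ⊗ 1 ⊗ 1`. -/
noncomputable def extF (e : EndF) : VV → VV := fun u =>
  u.sum fun STp f => Finsupp.single STp (e f)

/-- The operator `Z⁺(m) = Σ_{a,b≥0} (d⁻_a ⊗ 1 ⊗ 1) ∘ X(m+a-b) ∘ (c⁻_b ⊗ 1 ⊗ 1)` on `V`,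
the coefficient of `z^{-m}` in `E⁻₊(z) X(z) E⁻₋(z)` (only finitely many summands act
nontrivially on each vector). -/
noncomputable def ZplusV (m : ℤ) : VV → VV := fun u =>
  ∑ᶠ ab : ℕ × ℕ,
    extF (dOp false ab.1) (Xop (m + (ab.1 : ℤ) - (ab.2 : ℤ)) (extF (cOp false ab.2) u))

/-- The operator `Z⁻(m) = Σ_{a,b≥0} (d⁺_a ⊗ 1 ⊗ 1) ∘ Y(m+a-b) ∘ (c⁺_b ⊗ 1 ⊗ 1)` on `V`,
the coefficient of `z^{-m}` in `E⁺₊(z) Y(z) E⁺₋(z)`. -/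
noncomputable def ZminusV (m : ℤ) : VV → VV := fun u =>
  ∑ᶠ ab : ℕ × ℕ,
    extF (dOp true ab.1) (Yop (m + (ab.1 : ℤ) - (ab.2 : ℤ)) (extF (cOp true ab.2) u))

/-- `Ncount j` is the number of quadruples `(a, S, T, p)` with `a : ℤ_{≥1} → ℤ_{≥0}`
finitely supported, `S, T` finite subsets of the positive integers and `p ∈ ℤ`,
satisfying `2 Σ_{n≥1} n a(n) + 2 (Σ_{s∈S} s + Σ_{t∈T} t) + p² = j`; this is the
dimension of the eigenspace of `d` with eigenvalue `-j/2` on `V`. -/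
noncomputable def Ncount (j : ℕ) : ℕ :=
  Nat.card {q : (ℕ+ →₀ ℕ) × Finset ℕ+ × Finset ℕ+ × ℤ //
    2 * (q.1.sum fun n a => (n : ℤ) * a) +
      2 * ((∑ s ∈ q.2.1, (s : ℤ)) + ∑ t ∈ q.2.2.1, (t : ℤ)) + q.2.2.2 ^ 2 = (j : ℤ)}

section Statement4Aux
open PowerSeries Finset

private noncomputable def gam (n : ℕ) : EndF := PowerSeries.coeff (R := EndF) n (cSeries true)
private noncomputable def del (n : ℕ) : EndF := PowerSeries.coeff (R := EndF) n (dSeries false)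

private lemma gam_eq (n : ℕ) : gam n =
    if hn : 0 < n then (-2 : ℂ) • (pderiv (σ := ℕ+) (⟨n, hn⟩ : ℕ+)).toLinearMap else 0 := by
  rw [gam, cSeries, PowerSeries.coeff_mk]
  split_ifs with h
  · rw [sgn, if_pos rfl]
    exact (smul_smul (-1 : ℂ) (2 : ℂ) ((pderiv (⟨n, h⟩ : ℕ+)).toLinearMap : EndF)).trans (by rw [show (-1 : ℂ) * 2 = -2 by norm_num]; rfl)
  · rfl

private lemma del_eq (n : ℕ) : del n =
    if hn : 0 < n then ((2 * n : ℂ))⁻¹ • LinearMap.mulLeft ℂ (X (⟨n, hn⟩ : ℕ+) : Fock) else 0 := by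
  rw [del, dSeries, PowerSeries.coeff_mk]
  split_ifs with h
  · rw [sgn, if_neg (by simp)]
    exact one_smul _ _
  · rfl

private lemma pderiv_comm_mulLeft (i j : ℕ+) :
    (pderiv i).toLinearMap * LinearMap.mulLeft ℂ (X j : Fock) =
      LinearMap.mulLeft ℂ (X j : Fock) * (pderiv i).toLinearMap +
        (if i = j then (1 : EndF) else 0) := by
  apply LinearMap.ext; intro f
  by_cases h : i = j
  · subst h
    simp [Module.End.mul_apply, pderiv_mul, add_comm]
  · simp [Module.End.mul_apply, pderiv_mul, pderiv_X_of_ne (Ne.symm h), h]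

private lemma gen_comm (a j : ℕ) : gam a * del j =
    del j * gam a - (if a = j then ((j : ℂ))⁻¹ • (1 : EndF) else 0) := by
  by_cases ha : 0 < a
  · by_cases hj : 0 < j
    · have key := pderiv_comm_mulLeft (⟨a, ha⟩ : ℕ+) (⟨j, hj⟩ : ℕ+)
      rw [gam_eq, del_eq, dif_pos ha, dif_pos hj]
      simp only [smul_mul_assoc, mul_smul_comm, smul_smul]
      rw [key, smul_add, sub_eq_add_neg, mul_comm ((2 * (j : ℂ)))⁻¹ (-2)]
      congr 1
      have hjc : (j : ℂ) ≠ 0 := by exact_mod_cast hj.ne'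
      by_cases h : a = j
      · subst h
        rw [if_pos (rfl : @Eq ℕ+ ⟨a, ha⟩ ⟨a, hj⟩), if_pos rfl]
        have hs : ((-2 : ℂ) * (2 * (a : ℂ))⁻¹) = -((a : ℂ))⁻¹ := by
          field_simp
        rw [hs, neg_smul]
      · rw [if_neg (fun hc : @Eq ℕ+ ⟨a, ha⟩ ⟨j, hj⟩ => h (congrArg Subtype.val hc)), if_neg h]
        simp
    · have hjz : j = 0 := by omega
      subst hjz
      have hd : del 0 = 0 := by rw [del_eq]; simp
      rw [hd, mul_zero, zero_mul, if_neg (by omega)]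
      simp
  · have haz : a = 0 := by omega
    subst haz
    have hg : gam 0 = 0 := by rw [gam_eq]; simp
    rcases Nat.eq_zero_or_pos j with rfl | hj
    · have hd : del 0 = 0 := by rw [del_eq]; simp
      rw [hg, hd]
      simp
    · rw [hg, zero_mul, mul_zero, if_neg (by omega)]
      simp

private lemma mulLeft_mul' (p q : Fock) : LinearMap.mulLeft ℂ p * LinearMap.mulLeft ℂ q =
    LinearMap.mulLeft ℂ (p * q) := (LinearMap.mulLeft_mul ℂ Fock p q).symm

private lemma del_comm (i j : ℕ) : del i * del j = del j * del i := by
  by_cases hi : 0 < i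
  · by_cases hj : 0 < j
    · rw [del_eq, del_eq, dif_pos hi, dif_pos hj]
      simp only [smul_mul_assoc, mul_smul_comm, smul_smul, mulLeft_mul']
      rw [mul_comm ((2 * (i : ℂ)))⁻¹, mul_comm (X (⟨i, hi⟩ : ℕ+) : Fock)]
    · have hd : del j = 0 := by rw [del_eq, dif_neg hj]
      rw [hd, mul_zero, zero_mul]
  · have hd : del i = 0 := by rw [del_eq, dif_neg hi]
    rw [hd, mul_zero, zero_mul]

private lemma gam_zero : gam 0 = 0 := by rw [gam_eq]; simp

private lemma del_zero : del 0 = 0 := by rw [del_eq]; simp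

private lemma coeff_pow_eq_zero {g : PowerSeries EndF} (hg : PowerSeries.coeff (R := EndF) 0 g = 0)
    {j n : ℕ} (h : n < j) : PowerSeries.coeff (R := EndF) n (g ^ j) = 0 := by
  induction j generalizing n with
  | zero => omega
  | succ j ih =>
    rw [pow_succ', PowerSeries.coeff_mul]
    apply Finset.sum_eq_zero
    rintro ⟨a, b⟩ hp
    rw [Finset.HasAntidiagonal.mem_antidiagonal] at hp
    rcases Nat.eq_zero_or_pos a with rfl | hapos
    · simp only [hg, zero_mul]
    · rw [ih (by omega), mul_zero]

private lemma coeff0_c : PowerSeries.coeff (R := EndF) 0 (cSeries true) = 0 := gam_zero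
private lemma coeff0_d : PowerSeries.coeff (R := EndF) 0 (dSeries false) = 0 := del_zero

/-- The series `z Δ'(z)` whose `n`-th coefficient is `n • δ_n`. -/
private noncomputable def Ddot : PowerSeries EndF :=
  PowerSeries.mk fun n => (n : ℂ) • del n

private lemma del_def (n : ℕ) : PowerSeries.coeff (R := EndF) n (dSeries false) = del n := rfl
private lemma gam_def (n : ℕ) : PowerSeries.coeff (R := EndF) n (cSeries true) = gam n := rfl
private lemma Ddot_def (n : ℕ) : PowerSeries.coeff (R := EndF) n Ddot = (n : ℂ) • del n :=
  PowerSeries.coeff_mk _ _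

private lemma Ddot_comm : dSeries false * Ddot = Ddot * dSeries false := by
  apply PowerSeries.ext
  intro n
  rw [PowerSeries.coeff_mul, PowerSeries.coeff_mul]
  rw [← Finset.Nat.sum_antidiagonal_swap
    (f := fun p => PowerSeries.coeff (R := EndF) p.1 (dSeries false) * PowerSeries.coeff (R := EndF) p.2 Ddot)]
  apply Finset.sum_congr rfl
  intro p _
  simp only [Prod.fst_swap, Prod.snd_swap, Ddot_def, del_def]
  rw [mul_smul_comm, smul_mul_assoc, del_comm]

private lemma R2' (m l : ℕ) : ((l : ℕ) : ℂ) • PowerSeries.coeff (R := EndF) l ((dSeries false) ^ m) =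
    ((m : ℕ) : ℂ) • PowerSeries.coeff (R := EndF) l (Ddot * (dSeries false) ^ (m - 1)) := by
  induction m generalizing l with
  | zero =>
    rcases Nat.eq_zero_or_pos l with rfl | hl
    · simp
    · rw [pow_zero, PowerSeries.coeff_one, if_neg hl.ne']
      simp
  | succ m ih =>
    rw [pow_succ', PowerSeries.coeff_mul, Finset.smul_sum]
    have step : ∀ p ∈ antidiagonal l,
        ((l : ℕ) : ℂ) • (PowerSeries.coeff (R := EndF) p.1 (dSeries false) *
            PowerSeries.coeff (R := EndF) p.2 ((dSeries false) ^ m)) =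
          PowerSeries.coeff (R := EndF) p.1 Ddot * PowerSeries.coeff (R := EndF) p.2 ((dSeries false) ^ m)
          + ((m : ℕ) : ℂ) • (PowerSeries.coeff (R := EndF) p.1 (dSeries false) *
              PowerSeries.coeff (R := EndF) p.2 (Ddot * (dSeries false) ^ (m - 1))) := by
      intro p hp
      rw [Finset.HasAntidiagonal.mem_antidiagonal] at hp
      have hcast : ((l : ℕ) : ℂ) = ((p.1 : ℕ) : ℂ) + ((p.2 : ℕ) : ℂ) := by
        rw [← Nat.cast_add, hp]
      rw [hcast, add_smul]
      congr 1
      · rw [Ddot_def, del_def, smul_mul_assoc]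
      · rw [← mul_smul_comm, ih, mul_smul_comm]
    rw [Finset.sum_congr rfl step, Finset.sum_add_distrib]
    have e1 : ∑ p ∈ antidiagonal l,
        PowerSeries.coeff (R := EndF) p.1 Ddot * PowerSeries.coeff (R := EndF) p.2 ((dSeries false) ^ m) =
        PowerSeries.coeff (R := EndF) l (Ddot * (dSeries false) ^ m) := (PowerSeries.coeff_mul _ _ _).symm
    have e2 : ∑ p ∈ antidiagonal l,
        ((m : ℕ) : ℂ) • (PowerSeries.coeff (R := EndF) p.1 (dSeries false) *
          PowerSeries.coeff (R := EndF) p.2 (Ddot * (dSeries false) ^ (m - 1))) =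
        ((m : ℕ) : ℂ) •
          PowerSeries.coeff (R := EndF) l (dSeries false * (Ddot * (dSeries false) ^ (m - 1))) := by
      rw [← Finset.smul_sum, PowerSeries.coeff_mul]
    rw [e1, e2]
    have e4 : ((m : ℕ) : ℂ) •
        PowerSeries.coeff (R := EndF) l (dSeries false * (Ddot * (dSeries false) ^ (m - 1)))
        = ((m : ℕ) : ℂ) • PowerSeries.coeff (R := EndF) l (Ddot * (dSeries false) ^ m) := by
      rcases Nat.eq_zero_or_pos m with rfl | hm
      · simp
      · congr 2
        rw [← mul_assoc, Ddot_comm, mul_assoc, ← pow_succ', Nat.sub_add_cancel hm]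
    rw [e4, Nat.add_sub_cancel, Nat.cast_add, Nat.cast_one, add_smul, one_smul, add_comm]
private lemma fact_inv_succ (m : ℕ) :
    (((m + 1).factorial : ℂ))⁻¹ * (((m + 1 : ℕ)) : ℂ) = ((m.factorial : ℂ))⁻¹ := by
  have h1 : ((m : ℂ) + 1) ≠ 0 := Nat.cast_add_one_ne_zero m
  rw [Nat.factorial_succ]
  push_cast
  rw [mul_inv, mul_comm ((m : ℂ) + 1)⁻¹, mul_assoc, inv_mul_cancel₀ h1, mul_one]

private lemma dOp_eq (l : ℕ) : dOp false l =
    ∑ m ∈ range (l + 1),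
      ((m.factorial : ℂ))⁻¹ • PowerSeries.coeff (R := EndF) l ((dSeries false) ^ m) := rfl

private lemma cOp_eq (k : ℕ) : cOp true k =
    ∑ m ∈ range (k + 1),
      ((m.factorial : ℂ))⁻¹ • PowerSeries.coeff (R := EndF) k ((cSeries true) ^ m) := rfl

private lemma dOp_zero : dOp false 0 = 1 := by
  rw [dOp_eq]
  simp

private lemma R2 (l : ℕ) : ((l : ℕ) : ℂ) • dOp false l =
    ∑ p ∈ antidiagonal l, ((p.1 : ℕ) : ℂ) • (del p.1 * dOp false p.2) := by
  rw [dOp_eq, Finset.smul_sum]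
  have h1 : ∀ m ∈ range (l + 1),
      ((l : ℕ) : ℂ) • (((m.factorial : ℂ))⁻¹ • PowerSeries.coeff (R := EndF) l ((dSeries false) ^ m)) =
      ((m.factorial : ℂ))⁻¹ •
        (((m : ℕ) : ℂ) • PowerSeries.coeff (R := EndF) l (Ddot * (dSeries false) ^ (m - 1))) := by
    intro m _
    rw [smul_comm, R2']
  rw [Finset.sum_congr rfl h1, Finset.sum_range_succ']
  simp only [Nat.cast_zero, zero_smul, smul_zero, add_zero, Nat.add_sub_cancel]
  have h2 : ∀ m ∈ range l,
      (((m + 1).factorial : ℂ))⁻¹ •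
        (((m + 1 : ℕ) : ℂ) • PowerSeries.coeff (R := EndF) l (Ddot * (dSeries false) ^ m)) =
      ∑ p ∈ antidiagonal l, ((m.factorial : ℂ))⁻¹ •
        (((p.1 : ℕ) : ℂ) • del p.1 * PowerSeries.coeff (R := EndF) p.2 ((dSeries false) ^ m)) := by
    intro m _
    rw [smul_smul, fact_inv_succ, PowerSeries.coeff_mul, Finset.smul_sum]
    apply Finset.sum_congr rfl
    intro p _
    rw [Ddot_def]
  rw [Finset.sum_congr rfl h2, Finset.sum_comm]
  apply Finset.sum_congr rfl
  intro p hp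
  rw [Finset.HasAntidiagonal.mem_antidiagonal] at hp
  rcases Nat.eq_zero_or_pos p.1 with h0 | hpos
  · simp [h0]
  · have hterm : ∀ m ∈ range l,
        ((m.factorial : ℂ))⁻¹ •
          (((p.1 : ℕ) : ℂ) • del p.1 * PowerSeries.coeff (R := EndF) p.2 ((dSeries false) ^ m)) =
        ((p.1 : ℕ) : ℂ) • (del p.1 *
          (((m.factorial : ℂ))⁻¹ • PowerSeries.coeff (R := EndF) p.2 ((dSeries false) ^ m))) := by
      intro m _
      rw [smul_mul_assoc, smul_smul, mul_comm ((m.factorial : ℂ))⁻¹ ((p.1 : ℕ) : ℂ), ← smul_smul,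
        ← mul_smul_comm]
    rw [Finset.sum_congr rfl hterm, ← Finset.smul_sum, ← Finset.mul_sum]
    congr 2
    rw [dOp_eq]
    symm
    apply Finset.sum_subset
    · intro x hx
      rw [Finset.mem_range] at *
      omega
    · intro x hx hnx
      rw [Finset.mem_range] at hx hnx
      rw [coeff_pow_eq_zero coeff0_d (by omega), smul_zero]

private lemma K2' (j : ℕ) : ∀ (m k : ℕ),
    PowerSeries.coeff (R := EndF) k ((cSeries true) ^ m) * del j =
    del j * PowerSeries.coeff (R := EndF) k ((cSeries true) ^ m) -
      (if j ≤ k then ((j : ℂ))⁻¹ •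
        (((m : ℕ) : ℂ) • PowerSeries.coeff (R := EndF) (k - j) ((cSeries true) ^ (m - 1))) else 0) := by
  intro m
  induction m with
  | zero =>
    intro k
    simp only [pow_zero, PowerSeries.coeff_one, Nat.cast_zero, zero_smul, smul_zero, ite_self,
      sub_zero]
    split_ifs with h
    · rw [one_mul, mul_one]
    · rw [zero_mul, mul_zero]
  | succ m ih =>
    intro k
    conv_lhs => rw [pow_succ', PowerSeries.coeff_mul, Finset.sum_mul]
    have step : ∀ p ∈ antidiagonal k,
        (PowerSeries.coeff (R := EndF) p.1 (cSeries true) *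
            PowerSeries.coeff (R := EndF) p.2 ((cSeries true) ^ m)) * del j =
        del j * (PowerSeries.coeff (R := EndF) p.1 (cSeries true) *
            PowerSeries.coeff (R := EndF) p.2 ((cSeries true) ^ m))
        - (if p.1 = j then ((j : ℂ))⁻¹ • PowerSeries.coeff (R := EndF) p.2 ((cSeries true) ^ m) else 0)
        - (if j ≤ p.2 then ((j : ℂ))⁻¹ • (((m : ℕ) : ℂ) •
            (PowerSeries.coeff (R := EndF) p.1 (cSeries true) *
              PowerSeries.coeff (R := EndF) (p.2 - j) ((cSeries true) ^ (m - 1)))) else 0) := by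
      intro p _
      rw [mul_assoc, ih p.2, mul_sub, ← mul_assoc, gam_def, gen_comm, sub_mul, mul_assoc,
        ite_mul, zero_mul, smul_mul_assoc, one_mul, mul_ite, mul_zero, mul_smul_comm,
        mul_smul_comm]
    rw [Finset.sum_congr rfl step, Finset.sum_sub_distrib, Finset.sum_sub_distrib]
    have hX : ∑ p ∈ antidiagonal k, del j * (PowerSeries.coeff (R := EndF) p.1 (cSeries true) *
        PowerSeries.coeff (R := EndF) p.2 ((cSeries true) ^ m)) =
        del j * PowerSeries.coeff (R := EndF) k ((cSeries true) ^ (m + 1)) := by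
      rw [← Finset.mul_sum, ← PowerSeries.coeff_mul, ← pow_succ']
    have hY : ∑ p ∈ antidiagonal k,
        (if p.1 = j then ((j : ℂ))⁻¹ • PowerSeries.coeff (R := EndF) p.2 ((cSeries true) ^ m) else 0) =
        if j ≤ k then ((j : ℂ))⁻¹ • PowerSeries.coeff (R := EndF) (k - j) ((cSeries true) ^ m) else 0 := by
      rw [Finset.Nat.sum_antidiagonal_eq_sum_range_succ_mk, Finset.sum_ite_eq']
      simp only [Finset.mem_range, Nat.lt_succ_iff]
    have hZ : ∑ p ∈ antidiagonal k,
        (if j ≤ p.2 then ((j : ℂ))⁻¹ • (((m : ℕ) : ℂ) •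
          (PowerSeries.coeff (R := EndF) p.1 (cSeries true) *
            PowerSeries.coeff (R := EndF) (p.2 - j) ((cSeries true) ^ (m - 1)))) else 0) =
        if j ≤ k then ((j : ℂ))⁻¹ • (((m : ℕ) : ℂ) •
          PowerSeries.coeff (R := EndF) (k - j) ((cSeries true) ^ m)) else 0 := by
      rw [Finset.Nat.sum_antidiagonal_eq_sum_range_succ_mk]
      by_cases hjk : j ≤ k
      · rw [if_pos hjk]
        have hsub : range (Nat.succ (k - j)) ⊆ range (Nat.succ k) :=
          Finset.range_subset_range.mpr (by omega)
        have hvan : ∀ x ∈ range (Nat.succ k), x ∉ range (Nat.succ (k - j)) →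
            (if j ≤ k - x then ((j : ℂ))⁻¹ • (((m : ℕ) : ℂ) •
              (PowerSeries.coeff (R := EndF) x (cSeries true) *
                PowerSeries.coeff (R := EndF) (k - x - j) ((cSeries true) ^ (m - 1)))) else 0) = 0 := by
          intro x hx hnx
          rw [Finset.mem_range] at hx hnx
          rw [if_neg (by omega)]
        rw [← Finset.sum_subset hsub hvan]
        have hcongr : ∀ a ∈ range (Nat.succ (k - j)),
            (if j ≤ k - a then ((j : ℂ))⁻¹ • (((m : ℕ) : ℂ) •
              (PowerSeries.coeff (R := EndF) a (cSeries true) *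
                PowerSeries.coeff (R := EndF) (k - a - j) ((cSeries true) ^ (m - 1)))) else 0) =
            ((j : ℂ))⁻¹ • (((m : ℕ) : ℂ) •
              (PowerSeries.coeff (R := EndF) a (cSeries true) *
                PowerSeries.coeff (R := EndF) ((k - j) - a) ((cSeries true) ^ (m - 1)))) := by
          intro a ha
          rw [Finset.mem_range] at ha
          rw [if_pos (by omega), show k - a - j = (k - j) - a from by omega]
        rw [Finset.sum_congr rfl hcongr, ← Finset.smul_sum, ← Finset.smul_sum]
        congr 1
        have h2 : ∑ a ∈ range (Nat.succ (k - j)),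
            (PowerSeries.coeff (R := EndF) a (cSeries true) *
              PowerSeries.coeff (R := EndF) ((k - j) - a) ((cSeries true) ^ (m - 1))) =
            PowerSeries.coeff (R := EndF) (k - j) ((cSeries true) * (cSeries true) ^ (m - 1)) := by
          rw [PowerSeries.coeff_mul, Finset.Nat.sum_antidiagonal_eq_sum_range_succ_mk]
        rw [h2]
        rcases Nat.eq_zero_or_pos m with rfl | hm
        · simp
        · rw [← pow_succ', Nat.sub_add_cancel hm]
      · rw [if_neg hjk]
        apply Finset.sum_eq_zero
        intro a ha
        rw [Finset.mem_range] at ha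
        rw [if_neg (by omega)]
    rw [hX, hY, hZ, sub_sub]
    congr 1
    rw [Nat.add_sub_cancel]
    by_cases hjk : j ≤ k
    · rw [if_pos hjk, if_pos hjk, if_pos hjk, ← smul_add]
      congr 1
      rw [Nat.cast_add, Nat.cast_one, add_smul, one_smul, add_comm]
    · rw [if_neg hjk, if_neg hjk, if_neg hjk, add_zero]

private lemma K2 (k j : ℕ) : cOp true k * del j =
    del j * cOp true k - (if j ≤ k then ((j : ℂ))⁻¹ • cOp true (k - j) else 0) := by
  rcases Nat.eq_zero_or_pos j with rfl | hj
  · have hd : del 0 = 0 := del_zero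
    rw [hd, mul_zero, zero_mul]
    simp
  · rw [cOp_eq, Finset.sum_mul, Finset.mul_sum]
    have step : ∀ m ∈ range (k + 1),
        (((m.factorial : ℂ))⁻¹ • PowerSeries.coeff (R := EndF) k ((cSeries true) ^ m)) * del j =
        del j * (((m.factorial : ℂ))⁻¹ • PowerSeries.coeff (R := EndF) k ((cSeries true) ^ m)) -
          (if j ≤ k then ((m.factorial : ℂ))⁻¹ • (((j : ℂ))⁻¹ • (((m : ℕ) : ℂ) •
            PowerSeries.coeff (R := EndF) (k - j) ((cSeries true) ^ (m - 1)))) else 0) := by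
      intro m _
      rw [smul_mul_assoc, K2' j m k, smul_sub, mul_smul_comm]
      congr 1
      rw [smul_ite, smul_zero]
    rw [Finset.sum_congr rfl step, Finset.sum_sub_distrib]
    congr 1
    by_cases hjk : j ≤ k
    · simp only [if_pos hjk]
      rw [Finset.sum_range_succ']
      simp only [Nat.cast_zero, zero_smul, smul_zero, add_zero, Nat.add_sub_cancel]
      have e : ∀ m ∈ range k, (((m + 1).factorial : ℂ))⁻¹ • (((j : ℂ))⁻¹ •
          ((((m + 1 : ℕ)) : ℂ) • PowerSeries.coeff (R := EndF) (k - j) ((cSeries true) ^ m))) =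
          ((j : ℂ))⁻¹ • (((m.factorial : ℂ))⁻¹ •
            PowerSeries.coeff (R := EndF) (k - j) ((cSeries true) ^ m)) := by
        intro m _
        rw [smul_smul, smul_smul, smul_smul]
        congr 1
        have h1 : ((m.factorial : ℂ)) ≠ 0 := Nat.cast_ne_zero.mpr m.factorial_ne_zero
        have h2 : (((m + 1).factorial : ℂ)) ≠ 0 := Nat.cast_ne_zero.mpr (m + 1).factorial_ne_zero
        have h3 : ((j : ℂ)) ≠ 0 := Nat.cast_ne_zero.mpr (by omega)
        field_simp
        rw [Nat.factorial_succ]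
        push_cast
        ring
      rw [Finset.sum_congr rfl e, ← Finset.smul_sum]
      congr 1
      rw [cOp_eq]
      symm
      apply Finset.sum_subset
      · intro x hx
        rw [Finset.mem_range] at *
        omega
      · intro x hx hnx
        rw [Finset.mem_range] at hx hnx
        rw [coeff_pow_eq_zero coeff0_c (by omega), smul_zero]
    · simp only [if_neg hjk]
      exact Finset.sum_eq_zero fun m _ => rfl

private noncomputable def Tfun (k l j : ℕ) : EndF :=
  if 1 ≤ j ∧ j ≤ k ∧ j ≤ l then dOp false (l - j) * cOp true (k - j) else 0

set_option maxHeartbeats 1000000 in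
theorem statement4' (k l : ℕ) :
    cOp true k * dOp false l =
      dOp false l * cOp true k -
        (if 1 ≤ k ∧ 1 ≤ l then dOp false (l - 1) * cOp true (k - 1) else 0) := by
  induction l using Nat.strong_induction_on generalizing k with
  | _ l ih =>
  rcases Nat.eq_zero_or_pos l with rfl | hl
  · rw [dOp_zero, mul_one, one_mul, if_neg (by omega), sub_zero]
  · have hlc : ((l : ℕ) : ℂ) ≠ 0 := Nat.cast_ne_zero.mpr (by omega)
    apply smul_right_injective EndF hlc
    show ((l : ℕ) : ℂ) • (cOp true k * dOp false l) = ((l : ℕ) : ℂ) •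
      (dOp false l * cOp true k -
        (if 1 ≤ k ∧ 1 ≤ l then dOp false (l - 1) * cOp true (k - 1) else 0))
    have stepA : ((l : ℕ) : ℂ) • (cOp true k * dOp false l) =
        ∑ p ∈ antidiagonal l, ((p.1 : ℕ) : ℂ) • (cOp true k * (del p.1 * dOp false p.2)) := by
      rw [← mul_smul_comm, R2, Finset.mul_sum]
      exact Finset.sum_congr rfl fun p _ => mul_smul_comm _ _ _
    have key : ∀ p ∈ antidiagonal l,
        ((p.1 : ℕ) : ℂ) • (cOp true k * (del p.1 * dOp false p.2)) =
          (((p.1 : ℕ) : ℂ) • (del p.1 * (dOp false p.2 * cOp true k))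
           - (if 1 ≤ k ∧ 1 ≤ p.2 then
               ((p.1 : ℕ) : ℂ) • (del p.1 * (dOp false (p.2 - 1) * cOp true (k - 1))) else 0))
          - ((if 1 ≤ p.1 ∧ p.1 ≤ k then dOp false p.2 * cOp true (k - p.1) else 0)
             - (if 1 ≤ p.1 ∧ p.1 ≤ k ∧ 1 ≤ k - p.1 ∧ 1 ≤ p.2 then
                 dOp false (p.2 - 1) * cOp true (k - p.1 - 1) else 0)) := by
      intro p hp
      rw [Finset.HasAntidiagonal.mem_antidiagonal] at hp
      rcases Nat.eq_zero_or_pos p.1 with h0 | ha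
      · rw [h0]
        simp
      · have hane : ((p.1 : ℕ) : ℂ) ≠ 0 := Nat.cast_ne_zero.mpr (by omega)
        have e1 : cOp true k * (del p.1 * dOp false p.2) =
            del p.1 * (cOp true k * dOp false p.2) -
              (if p.1 ≤ k then ((p.1 : ℂ))⁻¹ • (cOp true (k - p.1) * dOp false p.2) else 0) := by
          rw [← mul_assoc, K2, sub_mul, mul_assoc, ite_mul, zero_mul, smul_mul_assoc]
        rw [e1, smul_sub]
        have e3 : ((p.1 : ℕ) : ℂ) • (del p.1 * (cOp true k * dOp false p.2)) =
            ((p.1 : ℕ) : ℂ) • (del p.1 * (dOp false p.2 * cOp true k))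
            - (if 1 ≤ k ∧ 1 ≤ p.2 then
                ((p.1 : ℕ) : ℂ) • (del p.1 * (dOp false (p.2 - 1) * cOp true (k - 1))) else 0) := by
          rw [ih p.2 (by omega) k]
          by_cases hg : 1 ≤ k ∧ 1 ≤ p.2
          · rw [if_pos hg, if_pos hg, mul_sub, smul_sub]
          · rw [if_neg hg, if_neg hg, sub_zero, sub_zero]
        have e2 : ((p.1 : ℕ) : ℂ) •
            (if p.1 ≤ k then ((p.1 : ℂ))⁻¹ • (cOp true (k - p.1) * dOp false p.2) else 0) =
            (if 1 ≤ p.1 ∧ p.1 ≤ k then dOp false p.2 * cOp true (k - p.1) else 0)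
             - (if 1 ≤ p.1 ∧ p.1 ≤ k ∧ 1 ≤ k - p.1 ∧ 1 ≤ p.2 then
                 dOp false (p.2 - 1) * cOp true (k - p.1 - 1) else 0) := by
          by_cases hak : p.1 ≤ k
          · rw [if_pos hak, smul_smul, mul_inv_cancel₀ hane, one_smul,
              ih p.2 (by omega) (k - p.1),
              if_pos (show 1 ≤ p.1 ∧ p.1 ≤ k from ⟨ha, hak⟩)]
            by_cases hg : 1 ≤ k - p.1 ∧ 1 ≤ p.2
            · rw [if_pos hg, if_pos (show 1 ≤ p.1 ∧ p.1 ≤ k ∧ 1 ≤ k - p.1 ∧ 1 ≤ p.2 from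
                ⟨ha, hak, hg.1, hg.2⟩)]
            · rw [if_neg hg,
                if_neg (show ¬(1 ≤ p.1 ∧ p.1 ≤ k ∧ 1 ≤ k - p.1 ∧ 1 ≤ p.2) from by tauto),
                sub_zero]
          · rw [if_neg hak, smul_zero,
              if_neg (show ¬(1 ≤ p.1 ∧ p.1 ≤ k) from by tauto),
              if_neg (show ¬(1 ≤ p.1 ∧ p.1 ≤ k ∧ 1 ≤ k - p.1 ∧ 1 ≤ p.2) from by tauto),
              sub_zero]
        rw [e3, e2]
    have hA : ∑ p ∈ antidiagonal l, ((p.1 : ℕ) : ℂ) • (del p.1 * (dOp false p.2 * cOp true k)) =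
        ((l : ℕ) : ℂ) • (dOp false l * cOp true k) := by
      have h : ∀ p ∈ antidiagonal l, ((p.1 : ℕ) : ℂ) • (del p.1 * (dOp false p.2 * cOp true k)) =
          (((p.1 : ℕ) : ℂ) • (del p.1 * dOp false p.2)) * cOp true k := by
        intro p _
        rw [smul_mul_assoc, mul_assoc]
      rw [Finset.sum_congr rfl h, ← Finset.sum_mul, ← R2, smul_mul_assoc]
    have hB : ∑ p ∈ antidiagonal l, (if 1 ≤ k ∧ 1 ≤ p.2 then
        ((p.1 : ℕ) : ℂ) • (del p.1 * (dOp false (p.2 - 1) * cOp true (k - 1))) else 0) =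
        if 1 ≤ k then ((l - 1 : ℕ) : ℂ) • (dOp false (l - 1) * cOp true (k - 1)) else 0 := by
      by_cases hk : 1 ≤ k
      · rw [if_pos hk]
        have hg : ∀ p ∈ antidiagonal l, (if 1 ≤ k ∧ 1 ≤ p.2 then
            ((p.1 : ℕ) : ℂ) • (del p.1 * (dOp false (p.2 - 1) * cOp true (k - 1))) else 0) =
            (if 1 ≤ p.2 then
            ((p.1 : ℕ) : ℂ) • (del p.1 * (dOp false (p.2 - 1) * cOp true (k - 1))) else 0) := by
          intro p _
          by_cases h2 : 1 ≤ p.2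
          · rw [if_pos (show 1 ≤ k ∧ 1 ≤ p.2 from ⟨hk, h2⟩), if_pos h2]
          · rw [if_neg (show ¬(1 ≤ k ∧ 1 ≤ p.2) from by tauto), if_neg h2]
        rw [Finset.sum_congr rfl hg]
        obtain ⟨L, rfl⟩ : ∃ L, l = L + 1 := ⟨l - 1, by omega⟩
        simp only [Finset.Nat.sum_antidiagonal_succ']
        rw [if_neg (by omega), zero_add, Nat.add_sub_cancel]
        have h : ∀ p ∈ antidiagonal L, (if 1 ≤ p.2 + 1 then
            ((p.1 : ℕ) : ℂ) • (del p.1 * (dOp false (p.2 + 1 - 1) * cOp true (k - 1))) else 0) =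
            (((p.1 : ℕ) : ℂ) • (del p.1 * dOp false p.2)) * cOp true (k - 1) := by
          intro p _
          rw [if_pos (by omega), Nat.add_sub_cancel, smul_mul_assoc, mul_assoc]
        rw [Finset.sum_congr rfl h, ← Finset.sum_mul, ← R2, smul_mul_assoc]
      · rw [if_neg hk]
        apply Finset.sum_eq_zero
        intro p _
        rw [if_neg (show ¬(1 ≤ k ∧ 1 ≤ p.2) from by tauto)]
    have hC : ∑ p ∈ antidiagonal l,
        (if 1 ≤ p.1 ∧ p.1 ≤ k then dOp false p.2 * cOp true (k - p.1) else 0) =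
        ∑ j ∈ range l, Tfun k l (j + 1) := by
      simp only [Finset.Nat.sum_antidiagonal_eq_sum_range_succ_mk, Nat.succ_eq_add_one]
      rw [Finset.sum_range_succ', if_neg (by omega), add_zero]
      apply Finset.sum_congr rfl
      intro j hj
      rw [Finset.mem_range] at hj
      unfold Tfun
      by_cases hg : j + 1 ≤ k
      · rw [if_pos (by omega), if_pos (by omega)]
      · rw [if_neg (by omega), if_neg (by omega)]
    have hD : ∑ p ∈ antidiagonal l,
        (if 1 ≤ p.1 ∧ p.1 ≤ k ∧ 1 ≤ k - p.1 ∧ 1 ≤ p.2 then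
          dOp false (p.2 - 1) * cOp true (k - p.1 - 1) else 0) =
        ∑ j ∈ range l, Tfun k l (j + 1 + 1) := by
      simp only [Finset.Nat.sum_antidiagonal_eq_sum_range_succ_mk, Nat.succ_eq_add_one]
      rw [Finset.sum_range_succ', if_neg (by omega), add_zero]
      apply Finset.sum_congr rfl
      intro j hj
      rw [Finset.mem_range] at hj
      unfold Tfun
      by_cases hg : j + 2 ≤ k ∧ j + 2 ≤ l
      · rw [if_pos (by omega), if_pos (by omega),
          show l - (j + 1) - 1 = l - (j + 1 + 1) from by omega,
          show k - (j + 1) - 1 = k - (j + 1 + 1) from by omega]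
      · rw [if_neg (by omega), if_neg (by omega)]
    have hCD : (∑ j ∈ range l, Tfun k l (j + 1)) - ∑ j ∈ range l, Tfun k l (j + 1 + 1) =
        Tfun k l 1 := by
      rw [← Finset.sum_sub_distrib, Finset.sum_range_sub' (fun j => Tfun k l (j + 1)) l,
        show Tfun k l (l + 1) = 0 from by unfold Tfun; rw [if_neg (by omega)], sub_zero]
    rw [stepA, Finset.sum_congr rfl key, Finset.sum_sub_distrib, Finset.sum_sub_distrib,
      Finset.sum_sub_distrib, hA, hB, hC, hD, hCD]
    unfold Tfun
    by_cases hk : 1 ≤ k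
    · rw [if_pos hk, if_pos (⟨hk, hl⟩ : 1 ≤ k ∧ 1 ≤ l),
        if_pos (⟨le_refl 1, hk, hl⟩ : 1 ≤ 1 ∧ 1 ≤ k ∧ 1 ≤ l)]
      rw [smul_sub, sub_sub]
      congr 1
      rw [show ((l : ℕ) : ℂ) = ((l - 1 : ℕ) : ℂ) + 1 from by
          rw [Nat.cast_sub hl, Nat.cast_one]; ring,
        add_smul, one_smul]
    · rw [if_neg hk, if_neg (show ¬(1 ≤ k ∧ 1 ≤ l) from by tauto),
        if_neg (show ¬(1 ≤ 1 ∧ 1 ≤ k ∧ 1 ≤ l) from by tauto), sub_zero, sub_zero, smul_sub,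
        smul_zero, sub_zero]

end Statement4Aux

theorem statement4 (k l : ℕ) :
    cOp true k * dOp false l =
      dOp false l * cOp true k -
        (if 1 ≤ k ∧ 1 ≤ l then dOp false (l - 1) * cOp true (k - 1) else 0) := by
  exact statement4' k l
end

section
/- For all m, n ∈ ℤ and every vector u ∈ V, the operators of the representation π satisfy [H(m), Y(n)]u = −2·Y(m+n)u. -/
open MvPolynomial

section PartA
set_option maxHeartbeats 1000000
open PowerSeries

lemma coeff_pow_zero_of_lt {g : PowerSeries EndF} (hg : PowerSeries.constantCoeff (R := EndF) g = 0) :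
    ∀ j l, l < j → PowerSeries.coeff (R := EndF) l (g ^ j) = 0 := by
  intro j
  induction j with
  | zero => intro l hl; omega
  | succ j ih =>
    intro l hl
    rw [pow_succ', PowerSeries.coeff_mul]
    apply Finset.sum_eq_zero
    rintro ⟨a, b⟩ hab
    rw [Finset.HasAntidiagonal.mem_antidiagonal] at hab
    by_cases ha : a = 0
    · subst ha
      simp [PowerSeries.coeff_zero_eq_constantCoeff, hg]
    · rw [ih b (by omega), mul_zero]

lemma C_mul_pow_bracket {H : EndF} {g : PowerSeries EndF} {c : ℂ} {m0 : ℕ}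
    (hb : ∀ k, H * PowerSeries.coeff (R := EndF) k g - PowerSeries.coeff (R := EndF) k g * H
      = if k = m0 then c • 1 else 0) :
    ∀ j : ℕ, (PowerSeries.C (R := EndF) H) * g ^ (j + 1)
      = g ^ (j + 1) * PowerSeries.C (R := EndF) H
        + ((j : ℂ) + 1) • (c • ((X : PowerSeries EndF) ^ m0 * g ^ j)) := by
  have hbase : (PowerSeries.C (R := EndF) H) * g
      = g * PowerSeries.C (R := EndF) H + c • (X : PowerSeries EndF) ^ m0 := by
    apply PowerSeries.ext
    intro k
    rw [map_add, PowerSeries.coeff_C_mul, PowerSeries.coeff_mul_C, PowerSeries.coeff_smul,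
      PowerSeries.coeff_X_pow]
    have := hb k
    rw [sub_eq_iff_eq_add] at this
    rw [this]
    by_cases hk : k = m0
    · simp only [if_pos hk]; exact add_comm _ _
    · simp only [if_neg hk, smul_zero, zero_add, add_zero]
  have hcomm : ∀ j : ℕ, g ^ j * (c • (X : PowerSeries EndF) ^ m0)
      = c • ((X : PowerSeries EndF) ^ m0 * g ^ j) := by
    intro j
    rw [mul_smul_comm]
    congr 1
    exact (((PowerSeries.commute_X g).symm.pow_left m0).pow_right j).symm
  intro j
  induction j with
  | zero =>
    rw [zero_add, pow_one, pow_zero, mul_one, hbase]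
    norm_num
  | succ j ih =>
    have h1 : (PowerSeries.C (R := EndF) H) * g ^ (j + 1 + 1)
        = ((PowerSeries.C (R := EndF) H) * g ^ (j + 1)) * g := by
      rw [mul_assoc, ← pow_succ]
    have h3 : ((X : PowerSeries EndF) ^ m0 * g ^ j) * g = (X : PowerSeries EndF) ^ m0 * g ^ (j + 1) := by
      rw [mul_assoc, ← pow_succ]
    rw [h1, ih, add_mul, mul_assoc, smul_mul_assoc, smul_mul_assoc, h3, hbase, mul_add,
      ← mul_assoc, ← pow_succ, hcomm (j + 1), add_assoc]
    congr 1
    push_cast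
    module

lemma coeff_bracket {H : EndF} {g : PowerSeries EndF} {c : ℂ} {m0 : ℕ}
    (hb : ∀ k, H * PowerSeries.coeff (R := EndF) k g - PowerSeries.coeff (R := EndF) k g * H
      = if k = m0 then c • 1 else 0) (j l : ℕ) :
    H * PowerSeries.coeff (R := EndF) l (g ^ (j + 1)) - PowerSeries.coeff (R := EndF) l (g ^ (j + 1)) * H
      = ((j : ℂ) + 1) • (c • (if m0 ≤ l then PowerSeries.coeff (R := EndF) (l - m0) (g ^ j) else 0)) := by
  have := congrArg (PowerSeries.coeff (R := EndF) l) (C_mul_pow_bracket hb j)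
  rw [map_add, PowerSeries.coeff_C_mul, PowerSeries.coeff_mul_C, PowerSeries.coeff_smul,
    PowerSeries.coeff_smul] at this
  rw [sub_eq_iff_eq_add, this, PowerSeries.coeff_X_pow_mul']
  ring_nf
  abel

lemma expCoeff_bracket {H : EndF} {g : PowerSeries EndF} {c : ℂ} {m0 : ℕ} (hm0 : 0 < m0)
    (hg : PowerSeries.constantCoeff (R := EndF) g = 0)
    (hb : ∀ k, H * PowerSeries.coeff (R := EndF) k g - PowerSeries.coeff (R := EndF) k g * H
      = if k = m0 then c • 1 else 0) (l : ℕ) :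
    H * expCoeff g l - expCoeff g l * H
      = if m0 ≤ l then c • expCoeff g (l - m0) else 0 := by
  have key : H * expCoeff g l - expCoeff g l * H
      = ∑ j ∈ Finset.range (l + 1),
          ((j.factorial : ℂ))⁻¹ • (H * PowerSeries.coeff (R := EndF) l (g ^ j)
            - PowerSeries.coeff (R := EndF) l (g ^ j) * H) := by
    rw [expCoeff, Finset.mul_sum, Finset.sum_mul, ← Finset.sum_sub_distrib]
    congr 1; ext j
    rw [mul_smul_comm, smul_mul_assoc, smul_sub]
  rw [key]
  rw [Finset.sum_range_succ']
  have h0 : ((Nat.factorial 0 : ℂ))⁻¹ • (H * PowerSeries.coeff (R := EndF) l (g ^ 0)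
      - PowerSeries.coeff (R := EndF) l (g ^ 0) * H) = 0 := by
    rw [pow_zero, PowerSeries.coeff_one]
    by_cases hl : l = 0 <;> simp [hl]
  rw [h0, add_zero]
  have hterm : ∀ j, ((Nat.factorial (j+1) : ℂ))⁻¹ • (H * PowerSeries.coeff (R := EndF) l (g ^ (j+1))
      - PowerSeries.coeff (R := EndF) l (g ^ (j+1)) * H)
      = if m0 ≤ l then ((j.factorial : ℂ))⁻¹ • (c • PowerSeries.coeff (R := EndF) (l - m0) (g ^ j)) else 0 := by
    intro j
    rw [coeff_bracket hb j l]
    by_cases hl : m0 ≤ l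
    · rw [if_pos hl, if_pos hl]
      rw [smul_smul, smul_smul, smul_smul]
      congr 1
      have hfact : (((j+1).factorial : ℂ)) = ((j:ℂ)+1) * (j.factorial : ℂ) := by
        rw [Nat.factorial_succ]; push_cast; ring
      have h1 : ((j.factorial : ℂ)) ≠ 0 := by exact_mod_cast j.factorial_ne_zero
      have h2 : ((j:ℂ)+1) ≠ 0 := Nat.cast_add_one_ne_zero j
      rw [hfact, mul_inv]
      field_simp
    · rw [if_neg hl, if_neg hl, smul_zero, smul_zero, smul_zero]
  rw [Finset.sum_congr rfl fun j _ => hterm j]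
  by_cases hl : m0 ≤ l
  · simp only [if_pos hl]
    rw [expCoeff, Finset.smul_sum]
    have hswap : ∀ j : ℕ, c • (((j.factorial : ℂ))⁻¹ • PowerSeries.coeff (R := EndF) (l - m0) (g ^ j))
        = ((j.factorial : ℂ))⁻¹ • (c • PowerSeries.coeff (R := EndF) (l - m0) (g ^ j)) :=
      fun j => smul_comm _ _ _
    rw [Finset.sum_congr rfl fun j _ => hswap j]
    symm
    apply Finset.sum_subset
    · apply Finset.range_subset_range.2; omega
    · intro j hj hj'
      rw [Finset.mem_range] at hj hj'
      rw [coeff_pow_zero_of_lt hg j (l - m0) (by omega), smul_zero, smul_zero]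
  · simp only [if_neg hl, Finset.sum_const_zero]

lemma expCoeff_commute {H : EndF} {g : PowerSeries EndF}
    (hb : ∀ k, H * PowerSeries.coeff (R := EndF) k g = PowerSeries.coeff (R := EndF) k g * H) (l : ℕ) :
    H * expCoeff g l = expCoeff g l * H := by
  have hC : Commute (PowerSeries.C (R := EndF) H) g := by
    apply PowerSeries.ext
    intro k
    rw [PowerSeries.coeff_C_mul, PowerSeries.coeff_mul_C]
    exact hb k
  have hpow : ∀ j : ℕ, H * PowerSeries.coeff (R := EndF) l (g ^ j)
      = PowerSeries.coeff (R := EndF) l (g ^ j) * H := by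
    intro j
    have := congrArg (PowerSeries.coeff (R := EndF) l) (hC.pow_right j).eq
    rwa [PowerSeries.coeff_C_mul, PowerSeries.coeff_mul_C] at this
  rw [expCoeff, Finset.mul_sum, Finset.sum_mul]
  congr 1; ext j
  rw [mul_smul_comm, smul_mul_assoc, hpow j]

lemma pderiv_mulLeft_bracket (i j : ℕ+) :
    ((pderiv i).toLinearMap : EndF) * LinearMap.mulLeft ℂ (X j)
      - LinearMap.mulLeft ℂ (X j) * (pderiv i).toLinearMap
      = if i = j then 1 else 0 := by
  apply LinearMap.ext
  intro f
  simp only [LinearMap.sub_apply, Module.End.mul_apply, LinearMap.mulLeft_apply,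
    Derivation.coeFn_coe, Function.comp_apply]
  rw [pderiv_mul]
  by_cases h : i = j
  · subst h
    rw [pderiv_X_self]
    simp
  · rw [pderiv_X_of_ne (Ne.symm h)]
    simp [h]

lemma pderiv_pderiv_comm (i j : ℕ+) :
    ((pderiv i).toLinearMap : EndF) * (pderiv j).toLinearMap
      = (pderiv j).toLinearMap * (pderiv i).toLinearMap := by
  apply LinearMap.ext
  intro f
  induction f using MvPolynomial.induction_on' with
  | monomial u a =>
    simp only [Module.End.mul_apply, Derivation.coeFn_coe]
    rw [pderiv_monomial, pderiv_monomial, pderiv_monomial, pderiv_monomial]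
    by_cases h : i = j
    · subst h; rfl
    · have hji : ((u - Finsupp.single j 1 : ℕ+ →₀ ℕ)) i = u i := by
        rw [Finsupp.tsub_apply, Finsupp.single_apply, if_neg (Ne.symm h), Nat.sub_zero]
      have hij : ((u - Finsupp.single i 1 : ℕ+ →₀ ℕ)) j = u j := by
        rw [Finsupp.tsub_apply, Finsupp.single_apply, if_neg h, Nat.sub_zero]
      rw [hji, hij, tsub_tsub, tsub_tsub, add_comm (Finsupp.single i 1)]
      ring_nf
  | add p q hp hq =>
    simp only [Module.End.mul_apply, Derivation.coeFn_coe, map_add] at hp hq ⊢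
    rw [hp, hq]

lemma dSeries_const : PowerSeries.constantCoeff (R := EndF) (dSeries false) = 0 := by
  rw [← PowerSeries.coeff_zero_eq_constantCoeff, dSeries, PowerSeries.coeff_mk]
  simp

lemma cSeries_const : PowerSeries.constantCoeff (R := EndF) (cSeries false) = 0 := by
  rw [← PowerSeries.coeff_zero_eq_constantCoeff, cSeries, PowerSeries.coeff_mk]
  simp

lemma HF_pos (m : ℤ) (hm : 1 ≤ m) :
    HF m = ((-4 : ℂ) * (m : ℂ)) • ((pderiv (Nat.toPNat m.toNat (by omega))).toLinearMap : EndF) := by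
  rw [HF, dif_pos hm]
  rfl

lemma HF_neg (m : ℤ) (hm : m ≤ -1) :
    HF m = (LinearMap.mulLeft ℂ (MvPolynomial.X (R := ℂ) (Nat.toPNat (-m).toNat (by omega))) : EndF) := by
  rw [HF, dif_neg (by omega), dif_pos hm]
  rfl

lemma dSeries_coeff (k : ℕ) : PowerSeries.coeff (R := EndF) k (dSeries false)
    = if hk : 0 < k then ((2 * k : ℂ))⁻¹ •
        (LinearMap.mulLeft ℂ (MvPolynomial.X (R := ℂ) (Nat.toPNat k hk)) : EndF) else 0 := by
  rw [dSeries, PowerSeries.coeff_mk]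
  by_cases hk : 0 < k
  · rw [dif_pos hk, dif_pos hk]
    exact one_smul ℂ _
  · rw [dif_neg hk, dif_neg hk]

lemma cSeries_coeff (k : ℕ) : PowerSeries.coeff (R := EndF) k (cSeries false)
    = if hk : 0 < k then (2 : ℂ) • ((pderiv (Nat.toPNat k hk)).toLinearMap : EndF) else 0 := by
  rw [cSeries, PowerSeries.coeff_mk]
  by_cases hk : 0 < k
  · rw [dif_pos hk, dif_pos hk]
    exact one_smul ℂ _
  · rw [dif_neg hk, dif_neg hk]

lemma smul_sub' (r : ℂ) (A B : EndF) : r • A - r • B = r • (A - B) :=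
  (smul_sub r A B).symm

lemma HF_dOp_bracket (m : ℤ) (hm : 1 ≤ m) (l : ℕ) :
    HF m * dOp false l - dOp false l * HF m
      = if m.toNat ≤ l then (-2 : ℂ) • dOp false (l - m.toNat) else 0 := by
  have hmC : ((m : ℂ)) ≠ 0 := by
    simp only [ne_eq, Int.cast_eq_zero]; omega
  apply expCoeff_bracket (by omega) dSeries_const
  intro k
  rw [dSeries_coeff, HF_pos m hm]
  by_cases hk : 0 < k
  · rw [dif_pos hk]
    rw [smul_mul_assoc, mul_smul_comm, smul_mul_assoc, mul_smul_comm,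
      smul_smul, smul_smul, mul_comm ((2 * (k : ℂ)))⁻¹, smul_sub',
      pderiv_mulLeft_bracket]
    by_cases hkm : k = m.toNat
    · subst hkm
      rw [if_pos rfl, if_pos rfl]
      have hcast : ((m.toNat : ℕ) : ℂ) = (m : ℂ) := by
        exact_mod_cast congrArg (Int.cast : ℤ → ℂ) (Int.toNat_of_nonneg (by omega : (0:ℤ) ≤ m))
      rw [hcast]
      congr 1
      field_simp
      ring
    · have h1 : ¬(Nat.toPNat m.toNat (by omega) = Nat.toPNat k hk) := by
        intro hh
        exact hkm (congrArg PNat.val hh).symm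
      rw [if_neg h1, if_neg hkm, smul_zero]
  · rw [dif_neg hk]
    have : ¬ (k = m.toNat) := by omega
    rw [if_neg this]
    simp

lemma HF_cOp_comm (m : ℤ) (hm : 1 ≤ m) (k : ℕ) :
    HF m * cOp false k = cOp false k * HF m := by
  apply expCoeff_commute
  intro j
  rw [cSeries_coeff, HF_pos m hm]
  by_cases hj : 0 < j
  · rw [dif_pos hj]
    rw [smul_mul_assoc, mul_smul_comm, smul_mul_assoc, mul_smul_comm,
      smul_smul, smul_smul, mul_comm ((2 : ℂ)), pderiv_pderiv_comm]
  · rw [dif_neg hj, mul_zero, zero_mul]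

lemma HF_dOp_comm (m : ℤ) (hm : m ≤ -1) (l : ℕ) :
    HF m * dOp false l = dOp false l * HF m := by
  apply expCoeff_commute
  intro j
  rw [dSeries_coeff, HF_neg m hm]
  by_cases hj : 0 < j
  · rw [dif_pos hj]
    rw [mul_smul_comm, smul_mul_assoc]
    congr 1
    apply LinearMap.ext
    intro f
    simp only [Module.End.mul_apply, LinearMap.mulLeft_apply]
    ring
  · rw [dif_neg hj, mul_zero, zero_mul]

lemma HF_cOp_bracket (m : ℤ) (hm : m ≤ -1) (k : ℕ) :
    HF m * cOp false k - cOp false k * HF m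
      = if (-m).toNat ≤ k then (-2 : ℂ) • cOp false (k - (-m).toNat) else 0 := by
  apply expCoeff_bracket (by omega) cSeries_const
  intro j
  rw [cSeries_coeff, HF_neg m hm]
  by_cases hj : 0 < j
  · rw [dif_pos hj]
    rw [mul_smul_comm, smul_mul_assoc, smul_sub']
    have hbr : (LinearMap.mulLeft ℂ (MvPolynomial.X (R := ℂ) (Nat.toPNat (-m).toNat (by omega))) : EndF) * ((pderiv (Nat.toPNat j hj)).toLinearMap : EndF)
        - ((pderiv (Nat.toPNat j hj)).toLinearMap : EndF) * LinearMap.mulLeft ℂ (MvPolynomial.X (R := ℂ) (Nat.toPNat (-m).toNat (by omega)))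
        = - (if Nat.toPNat j hj = Nat.toPNat (-m).toNat (by omega) then 1 else 0) := by
      rw [← pderiv_mulLeft_bracket]
      abel
    rw [hbr]
    by_cases hjm : j = (-m).toNat
    · have : Nat.toPNat j hj = Nat.toPNat (-m).toNat (by omega) := PNat.eq hjm
      rw [if_pos this, if_pos hjm]
      rw [smul_neg]
      exact (neg_smul (2:ℂ) (1:EndF)).symm
    · have : ¬ Nat.toPNat j hj = Nat.toPNat (-m).toNat (by omega) := by
        intro hh; exact hjm (congrArg PNat.val hh)
      rw [if_neg this, if_neg hjm]
      simp
  · rw [dif_neg hj]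
    have : ¬ (j = (-m).toNat) := by omega
    rw [if_neg this]
    simp

lemma comm_apply_pos (m : ℤ) (hm : 1 ≤ m) (l k : ℕ) (f : Fock) :
    HF m (dOp false l (cOp false k f)) - dOp false l (cOp false k (HF m f))
      = if m.toNat ≤ l then (-2 : ℂ) • (dOp false (l - m.toNat) (cOp false k f)) else 0 := by
  have h1 := congrArg (fun e : EndF => e (cOp false k f)) (HF_dOp_bracket m hm l)
  simp only [LinearMap.sub_apply, Module.End.mul_apply] at h1
  have h2 := congrArg (fun e : EndF => e f) (HF_cOp_comm m hm k)
  simp only [Module.End.mul_apply] at h2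
  rw [← h2]
  rw [sub_eq_iff_eq_add] at h1 ⊢
  rw [h1]
  by_cases hl : m.toNat ≤ l
  · rw [if_pos hl, if_pos hl]
    simp
  · rw [if_neg hl, if_neg hl]
    simp

lemma comm_apply_neg (m : ℤ) (hm : m ≤ -1) (l k : ℕ) (f : Fock) :
    HF m (dOp false l (cOp false k f)) - dOp false l (cOp false k (HF m f))
      = if (-m).toNat ≤ k then (-2 : ℂ) • (dOp false l (cOp false (k - (-m).toNat) f)) else 0 := by
  have h2 := congrArg (fun e : EndF => e (cOp false k f)) (HF_dOp_comm m hm l)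
  simp only [Module.End.mul_apply] at h2
  have h1 := congrArg (fun e : EndF => e f) (HF_cOp_bracket m hm k)
  simp only [LinearMap.sub_apply, Module.End.mul_apply] at h1
  rw [h2, ← map_sub, h1]
  by_cases hk : (-m).toNat ≤ k
  · rw [if_pos hk, if_pos hk] at *
    simp
  · rw [if_neg hk, if_neg hk] at *
    simp

end PartA

section PartB

/-- weight of a monomial exponent -/
def wtN (μ : ℕ+ →₀ ℕ) : ℕ := μ.sum fun n a => (n : ℕ) * a

lemma wtN_add (μ ν : ℕ+ →₀ ℕ) : wtN (μ + ν) = wtN μ + wtN ν := by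
  unfold wtN
  apply Finsupp.sum_add_index' (fun n => by simp) (fun n a b => by ring)

lemma wtN_single (i : ℕ+) : wtN (Finsupp.single i 1) = (i : ℕ) := by
  unfold wtN
  rw [Finsupp.sum_single_index (by simp)]
  simp

/-- `e` lowers the weight by at least `k` -/
def Low (k : ℕ) (e : EndF) : Prop :=
  ∀ f : Fock, ∀ μ ∈ (e f).support, ∃ ν ∈ f.support, wtN μ + k ≤ wtN ν

lemma Low_zero (k : ℕ) : Low k (0 : EndF) := by
  intro f μ hμ
  simp at hμ

lemma Low_one : Low 0 (1 : EndF) := by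
  intro f μ hμ
  exact ⟨μ, hμ, by omega⟩

lemma Low_add {k : ℕ} {e₁ e₂ : EndF} (h₁ : Low k e₁) (h₂ : Low k e₂) : Low k (e₁ + e₂) := by
  intro f μ hμ
  have := MvPolynomial.support_add (p := e₁ f) (q := e₂ f) hμ
  rcases Finset.mem_union.mp this with h | h
  · exact h₁ f μ h
  · exact h₂ f μ h

lemma Low_smul {k : ℕ} {e : EndF} (c : ℂ) (h : Low k e) : Low k (c • e) := by
  intro f μ hμ
  apply h f μ
  have : (c • e) f = c • (e f) := rfl
  rw [this] at hμ
  exact Finsupp.support_smul hμ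

lemma Low_mul {k₁ k₂ : ℕ} {e₁ e₂ : EndF} (h₁ : Low k₁ e₁) (h₂ : Low k₂ e₂) :
    Low (k₁ + k₂) (e₁ * e₂) := by
  intro f μ hμ
  obtain ⟨ν, hν, hw⟩ := h₁ (e₂ f) μ hμ
  obtain ⟨ρ, hρ, hw'⟩ := h₂ f ν hν
  exact ⟨ρ, hρ, by omega⟩

lemma Low_sum {k : ℕ} {ι : Type*} (s : Finset ι) (e : ι → EndF) (h : ∀ i ∈ s, Low k (e i)) :
    Low k (∑ i ∈ s, e i) := by
  classical
  induction s using Finset.induction_on with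
  | empty => simpa using Low_zero k
  | insert x s hx ih =>
    rw [Finset.sum_insert hx]
    exact Low_add (h _ (Finset.mem_insert_self _ _)) (ih fun i hi => h i (Finset.mem_insert_of_mem hi))

lemma coeff_pderiv (i : ℕ+) (f : Fock) (μ : ℕ+ →₀ ℕ) :
    MvPolynomial.coeff μ (pderiv i f)
      = ((μ i : ℂ) + 1) * MvPolynomial.coeff (μ + Finsupp.single i 1) f := by
  induction f using MvPolynomial.induction_on' with
  | monomial u a =>
    rw [pderiv_monomial, MvPolynomial.coeff_monomial, MvPolynomial.coeff_monomial]
    by_cases h : u = μ + Finsupp.single i 1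
    · subst h
      have hui : ((μ + Finsupp.single i 1 : ℕ+ →₀ ℕ)) i = μ i + 1 := by
        rw [Finsupp.add_apply, Finsupp.single_eq_same]
      have hsub : μ + Finsupp.single i 1 - Finsupp.single i 1 = μ := add_tsub_cancel_right _ _
      rw [if_pos hsub, if_pos rfl, hui]
      push_cast
      ring
    · rw [if_neg h]
      by_cases h2 : u - Finsupp.single i 1 = μ
      · by_cases h3 : u i = 0
        · rw [if_pos h2, h3]
          norm_num
        · exfalso
          apply h
          rw [← h2]
          exact (tsub_add_cancel_of_le (Finsupp.single_le_iff.mpr (by omega))).symm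
      · rw [if_neg h2, mul_zero]
  | add p q hp hq =>
    rw [map_add, MvPolynomial.coeff_add, MvPolynomial.coeff_add, hp, hq]
    ring

lemma Low_pderiv (i : ℕ+) : Low (i : ℕ) ((pderiv i).toLinearMap : EndF) := by
  intro f μ hμ
  rw [MvPolynomial.mem_support_iff] at hμ
  have hμ' : MvPolynomial.coeff μ ((pderiv i) f) ≠ 0 := hμ
  have h := coeff_pderiv i f μ
  have hne : MvPolynomial.coeff (μ + Finsupp.single i 1) f ≠ 0 := by
    intro h0
    apply hμ'
    show MvPolynomial.coeff μ ((pderiv i) f) = 0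
    rw [h, h0, mul_zero]
  refine ⟨μ + Finsupp.single i 1, MvPolynomial.mem_support_iff.mpr hne, ?_⟩
  rw [wtN_add, wtN_single]

lemma Low_coeff_cSeries (ε : Bool) (a : ℕ) :
    Low a (PowerSeries.coeff (R := EndF) a (cSeries ε)) := by
  rw [cSeries, PowerSeries.coeff_mk]
  by_cases ha : 0 < a
  · rw [dif_pos ha]
    exact Low_smul _ (Low_smul _ (Low_pderiv ⟨a, ha⟩))
  · rw [dif_neg ha]
    exact Low_zero a

lemma Low_coeff_cSeries_pow (ε : Bool) (j : ℕ) :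
    ∀ k : ℕ, Low k (PowerSeries.coeff (R := EndF) k ((cSeries ε) ^ j)) := by
  induction j with
  | zero =>
    intro k
    rw [pow_zero, PowerSeries.coeff_one]
    by_cases hk : k = 0
    · rw [if_pos hk, hk]; exact Low_one
    · rw [if_neg hk]; exact Low_zero k
  | succ j ih =>
    intro k
    rw [pow_succ', PowerSeries.coeff_mul]
    apply Low_sum
    rintro ⟨a, b⟩ hab
    rw [Finset.HasAntidiagonal.mem_antidiagonal] at hab
    have : Low (a + b) (PowerSeries.coeff (R := EndF) a (cSeries ε) * PowerSeries.coeff (R := EndF) b (cSeries ε ^ j)) :=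
      Low_mul (Low_coeff_cSeries ε a) (ih b)
    rwa [hab] at this

lemma Low_cOp (ε : Bool) (k : ℕ) : Low k (cOp ε k) := by
  rw [cOp, expCoeff]
  apply Low_sum
  intro j _
  exact Low_smul _ (Low_coeff_cSeries_pow ε j k)

lemma cOp_eq_zero (ε : Bool) (f : Fock) (k : ℕ) (hk : f.support.sup wtN < k) :
    cOp ε k f = 0 := by
  by_contra h
  obtain ⟨μ, hμ⟩ := Finset.nonempty_iff_ne_empty.mpr (mt MvPolynomial.support_eq_empty.mp h)
  obtain ⟨ν, hν, hw⟩ := Low_cOp ε k f μ hμ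
  have : wtN ν ≤ f.support.sup wtN := Finset.le_sup hν
  omega

end PartB

section PartC

lemma emb_zero (w : Wedge) (p : ℤ) : emb w p 0 = 0 := by
  rw [emb]
  simp

lemma emb_zero_w (p : ℤ) (f : Fock) : emb 0 p f = 0 := by
  rw [emb, Finsupp.sum_zero_index]

lemma emb_add (w : Wedge) (p : ℤ) (f g : Fock) :
    emb w p (f + g) = emb w p f + emb w p g := by
  rw [emb, emb, emb, ← Finsupp.sum_add]
  apply Finsupp.sum_congr
  intro ST _
  rw [smul_add, Finsupp.single_add]

lemma emb_sub (w : Wedge) (p : ℤ) (f g : Fock) :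
    emb w p (f - g) = emb w p f - emb w p g := by
  rw [emb, emb, emb, ← Finsupp.sum_sub]
  apply Finsupp.sum_congr
  intro ST _
  rw [smul_sub, Finsupp.single_sub]

lemma emb_smul (w : Wedge) (p : ℤ) (c : ℂ) (f : Fock) :
    emb w p (c • f) = c • emb w p f := by
  rw [emb, emb, Finsupp.smul_sum]
  apply Finsupp.sum_congr
  intro ST _
  rw [smul_comm, Finsupp.smul_single]

lemma HVop_single (m : ℤ) (STp : (Finset ℕ+ × Finset ℕ+) × ℤ) (f : Fock) :
    HVop m (Finsupp.single STp f)
      = Finsupp.single STp (if m = 0 then ((2:ℂ) * (STp.2 : ℂ)) • f else HF m f) := by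
  rw [HVop, Finsupp.sum_single_index]
  split <;> simp

lemma HVop_add (m : ℤ) (u v : VV) : HVop m (u + v) = HVop m u + HVop m v := by
  rw [HVop, HVop, HVop]
  apply Finsupp.sum_add_index'
  · intro STp; split <;> simp
  · intro STp f g; split
    · rw [smul_add, Finsupp.single_add]
    · rw [map_add, Finsupp.single_add]

lemma HVop_zero (m : ℤ) : HVop m 0 = 0 := by
  rw [HVop, Finsupp.sum_zero_index]

noncomputable def HVhom (m : ℤ) : VV →+ VV := AddMonoidHom.mk' (HVop m) (HVop_add m)

lemma HVop_emb (m : ℤ) (w : Wedge) (q : ℤ) (g : Fock) :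
    HVop m (emb w q g) = emb w q (if m = 0 then ((2:ℂ) * (q : ℂ)) • g else HF m g) := by
  rw [emb, Finsupp.sum, emb, Finsupp.sum]
  rw [show HVop m = ⇑(HVhom m) from rfl, map_sum]
  apply Finset.sum_congr rfl
  intro ST _
  rw [show ⇑(HVhom m) = HVop m from rfl, HVop_single]
  congr 1
  split
  · rw [smul_comm]
  · rw [map_smul]

/-- the family of terms in `Yop` on a basis vector -/
noncomputable def FamF (ST : Finset ℕ+ × Finset ℕ+) (n p : ℤ) (g : ℕ × ℕ → Fock) :
    ℕ × ℕ → VV :=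
  fun lk => emb (AstarBasis ((n : ℚ) + lk.1 - lk.2 + p - 1/2) ST) (p - 1) (g lk)

noncomputable def DD (f : Fock) : ℕ × ℕ → Fock :=
  fun lk => dOp false lk.1 (cOp false lk.2 f)

lemma Yop_single (n : ℤ) (ST : Finset ℕ+ × Finset ℕ+) (p : ℤ) (f : Fock) :
    Yop n (Finsupp.single (ST, p) f) = ∑ᶠ lk, FamF ST n p (DD f) lk := by
  rw [Yop, Finsupp.sum_single_index]
  · rfl
  · simp [emb_zero, finsum_zero]

lemma Yop_zero (n : ℤ) : Yop n 0 = 0 := by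
  rw [Yop, Finsupp.sum_zero_index]

end PartC

section PartD

def supS (ST : Finset ℕ+ × Finset ℕ+) : ℕ := ST.1.sup fun s : ℕ+ => (s : ℕ)

lemma floor_half (N : ℤ) : ⌊(N : ℚ) - 1/2⌋ = N - 1 := by
  have h : (N : ℚ) - 1/2 = 1/2 + ((N - 1 : ℤ) : ℚ) := by push_cast; ring
  rw [h, Int.floor_add_intCast]
  norm_num

lemma AstarBasis_floor_le {q : ℚ} {ST : Finset ℕ+ × Finset ℕ+} (h : AstarBasis q ST ≠ 0) :
    ⌊q⌋ ≤ (supS ST : ℤ) := by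
  rw [AstarBasis] at h
  simp only [] at h
  split at h
  · split at h
    · rename_i hn
      split at h
      · rename_i hmem
        have hle := Finset.le_sup (f := fun s : ℕ+ => (s : ℕ)) hmem
        simp only [PNat.mk_coe] at hle
        have : ⌊q⌋.toNat ≤ supS ST := hle
        omega
      · exact absurd rfl h
    · split at h
      · rename_i _ hn'
        have : (0:ℤ) ≤ (supS ST : ℤ) := Int.ofNat_nonneg _
        omega
      · exact absurd rfl h
  · exact absurd rfl h

lemma FamF_support_finite (ST : Finset ℕ+ × Finset ℕ+) (n p : ℤ) (g : ℕ × ℕ → Fock) (K : ℕ)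
    (hg : ∀ lk : ℕ × ℕ, K < lk.2 → g lk = 0) :
    (Function.support (FamF ST n p g)).Finite := by
  set A : ℕ := ((supS ST : ℤ) + 1 + K - n - p).toNat with hA
  apply Set.Finite.subset (Set.finite_Icc ((0,0) : ℕ × ℕ) ((A, K) : ℕ × ℕ))
  intro lk hlk
  rw [Function.mem_support] at hlk
  have hk : lk.2 ≤ K := by
    by_contra hk
    rw [FamF, hg lk (by omega), emb_zero] at hlk
    exact hlk rfl
  have hw : AstarBasis ((n : ℚ) + lk.1 - lk.2 + p - 1/2) ST ≠ 0 := by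
    intro h0
    rw [FamF, h0, emb_zero_w] at hlk
    exact hlk rfl
  have hfl := AstarBasis_floor_le hw
  have harg : (n : ℚ) + lk.1 - lk.2 + p - 1/2 = ((n + lk.1 - lk.2 + p : ℤ) : ℚ) - 1/2 := by
    push_cast; ring
  rw [harg, floor_half] at hfl
  have hl : lk.1 ≤ A := by omega
  rw [Set.mem_Icc]
  exact ⟨⟨Nat.zero_le _, Nat.zero_le _⟩, ⟨hl, hk⟩⟩

lemma DD_bound (f : Fock) : ∀ lk : ℕ × ℕ, f.support.sup wtN < lk.2 → DD f lk = 0 := by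
  intro lk h
  rw [DD, cOp_eq_zero false f lk.2 h, map_zero]

lemma Yop_add (n : ℤ) (u v : VV) : Yop n (u + v) = Yop n u + Yop n v := by
  rw [Yop, Yop, Yop]
  apply Finsupp.sum_add_index'
  · intro STp
    simp [emb_zero, finsum_zero]
  · intro STp f g
    have h1 : ∀ lk : ℕ × ℕ, dOp false lk.1 (cOp false lk.2 (f + g))
        = dOp false lk.1 (cOp false lk.2 f) + dOp false lk.1 (cOp false lk.2 g) := by
      intro lk; rw [map_add, map_add]
    calc (∑ᶠ lk : ℕ × ℕ, emb (AstarBasis ((n:ℚ) + lk.1 - lk.2 + STp.2 - 1/2) STp.1) (STp.2 - 1)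
            (dOp false lk.1 (cOp false lk.2 (f + g))))
        = ∑ᶠ lk : ℕ × ℕ, (FamF STp.1 n STp.2 (DD f) lk + FamF STp.1 n STp.2 (DD g) lk) := by
          apply finsum_congr
          intro lk
          rw [h1 lk, emb_add]
          rfl
      _ = (∑ᶠ lk, FamF STp.1 n STp.2 (DD f) lk) + ∑ᶠ lk, FamF STp.1 n STp.2 (DD g) lk := by
          apply finsum_add_distrib
          · exact FamF_support_finite _ _ _ _ _ (DD_bound f)
          · exact FamF_support_finite _ _ _ _ _ (DD_bound g)
      _ = _ := rfl

lemma finsum_shift1 (m0 : ℕ) (G : ℕ × ℕ → VV) (h : (Function.support G).Finite) :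
    (∑ᶠ lk : ℕ × ℕ, if m0 ≤ lk.1 then G (lk.1 - m0, lk.2) else 0) = ∑ᶠ lk, G lk := by
  classical
  set e : ℕ × ℕ → ℕ × ℕ := fun lk => (lk.1 + m0, lk.2) with he
  have hinj : Function.Injective e := by
    rintro ⟨a1, a2⟩ ⟨b1, b2⟩ hab
    simp only [he, Prod.mk.injEq] at hab
    exact Prod.ext (by omega) hab.2
  have hsub : Function.support (fun lk : ℕ × ℕ => if m0 ≤ lk.1 then G (lk.1 - m0, lk.2) else 0)
      ⊆ ↑(h.toFinset.image e) := by
    intro lk hlk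
    rw [Function.mem_support] at hlk
    by_cases hm : m0 ≤ lk.1
    · rw [if_pos hm] at hlk
      simp only [Finset.coe_image, Set.mem_image, Finset.mem_coe, Set.Finite.mem_toFinset]
      exact ⟨(lk.1 - m0, lk.2), hlk, by simp only [he]; exact Prod.ext (by omega) rfl⟩
    · rw [if_neg hm] at hlk; exact absurd rfl hlk
  rw [finsum_eq_sum_of_support_subset _ hsub,
    finsum_eq_sum_of_support_subset G (by rw [Set.Finite.coe_toFinset] : Function.support G ⊆ ↑h.toFinset),
    Finset.sum_image (fun a _ b _ hab => hinj hab)]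
  apply Finset.sum_congr rfl
  intro a _
  rw [if_pos (by simp [he] : m0 ≤ (e a).1)]
  congr 1
  simp only [he]
  exact Prod.ext (by omega) rfl

lemma finsum_shift2 (m0 : ℕ) (G : ℕ × ℕ → VV) (h : (Function.support G).Finite) :
    (∑ᶠ lk : ℕ × ℕ, if m0 ≤ lk.2 then G (lk.1, lk.2 - m0) else 0) = ∑ᶠ lk, G lk := by
  classical
  set e : ℕ × ℕ → ℕ × ℕ := fun lk => (lk.1, lk.2 + m0) with he
  have hinj : Function.Injective e := by
    rintro ⟨a1, a2⟩ ⟨b1, b2⟩ hab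
    simp only [he, Prod.mk.injEq] at hab
    exact Prod.ext hab.1 (by omega)
  have hsub : Function.support (fun lk : ℕ × ℕ => if m0 ≤ lk.2 then G (lk.1, lk.2 - m0) else 0)
      ⊆ ↑(h.toFinset.image e) := by
    intro lk hlk
    rw [Function.mem_support] at hlk
    by_cases hm : m0 ≤ lk.2
    · rw [if_pos hm] at hlk
      simp only [Finset.coe_image, Set.mem_image, Finset.mem_coe, Set.Finite.mem_toFinset]
      exact ⟨(lk.1, lk.2 - m0), hlk, by simp only [he]; exact Prod.ext rfl (by omega)⟩
    · rw [if_neg hm] at hlk; exact absurd rfl hlk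
  rw [finsum_eq_sum_of_support_subset _ hsub,
    finsum_eq_sum_of_support_subset G (by rw [Set.Finite.coe_toFinset] : Function.support G ⊆ ↑h.toFinset),
    Finset.sum_image (fun a _ b _ hab => hinj hab)]
  apply Finset.sum_congr rfl
  intro a _
  rw [if_pos (by simp [he] : m0 ≤ (e a).2)]
  congr 1
  simp only [he]
  exact Prod.ext rfl (by omega)

end PartD

section PartE

lemma DD_smul (c : ℂ) (f : Fock) (lk : ℕ × ℕ) : DD (c • f) lk = c • DD f lk := by
  rw [DD, DD, map_smul, map_smul]

lemma toNat_cast_q (m : ℤ) (hm : 0 ≤ m) : ((m.toNat : ℕ) : ℚ) = (m : ℚ) := by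
  exact_mod_cast congrArg (Int.cast : ℤ → ℚ) (Int.toNat_of_nonneg hm)

lemma key_single (m n : ℤ) (ST : Finset ℕ+ × Finset ℕ+) (p : ℤ) (f : Fock) :
    HVop m (Yop n (Finsupp.single (ST, p) f)) - Yop n (HVop m (Finsupp.single (ST, p) f))
      = (-2 : ℂ) • Yop (m + n) (Finsupp.single (ST, p) f) := by
  classical
  have hfin1 : (Function.support (FamF ST n p (DD f))).Finite :=
    FamF_support_finite ST n p (DD f) _ (DD_bound f)
  have hfinMN : (Function.support (FamF ST (m + n) p (DD f))).Finite :=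
    FamF_support_finite ST (m + n) p (DD f) _ (DD_bound f)
  set g3 : ℕ × ℕ → Fock := fun lk => if m = 0 then ((2:ℂ) * ((p - 1 : ℤ) : ℂ)) • DD f lk
      else HF m (DD f lk) with hg3
  have hfin3 : (Function.support (FamF ST n p g3)).Finite := by
    apply FamF_support_finite ST n p g3 (f.support.sup wtN)
    intro lk hlk
    rw [hg3]
    simp only [DD_bound f lk hlk]
    split <;> simp
  set h0 : Fock := (if m = 0 then ((2:ℂ) * ((p : ℤ) : ℂ)) • f else HF m f) with hh0
  have hfin2 : (Function.support (FamF ST n p (DD h0))).Finite :=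
    FamF_support_finite ST n p (DD h0) _ (DD_bound h0)
  have hYHV : Yop n (HVop m (Finsupp.single (ST, p) f)) = ∑ᶠ lk, FamF ST n p (DD h0) lk := by
    rw [HVop_single, Yop_single]
  have hHVY : HVop m (Yop n (Finsupp.single (ST, p) f)) = ∑ᶠ lk, FamF ST n p g3 lk := by
    rw [Yop_single, show HVop m = ⇑(HVhom m) from rfl, AddMonoidHom.map_finsum _ hfin1]
    apply finsum_congr
    intro lk
    show HVop m (FamF ST n p (DD f) lk) = _
    rw [FamF, HVop_emb]
    rfl
  rw [hHVY, hYHV, ← finsum_sub_distrib hfin3 hfin2]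
  rw [Yop_single, smul_finsum' (-2 : ℂ) hfinMN]
  have hcombine : ∀ lk : ℕ × ℕ, FamF ST n p g3 lk - FamF ST n p (DD h0) lk
      = emb (AstarBasis ((n : ℚ) + lk.1 - lk.2 + p - 1/2) ST) (p - 1) (g3 lk - DD h0 lk) := by
    intro lk
    rw [FamF, FamF, emb_sub]
  rw [finsum_congr hcombine]
  by_cases hm0 : m = 0
  · subst hm0
    rw [zero_add]
    apply finsum_congr
    intro lk
    have : g3 lk - DD h0 lk = (-2 : ℂ) • DD f lk := by
      simp only [hg3, hh0, ↓reduceIte]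
      rw [DD_smul, ← sub_smul]
      congr 1
      push_cast
      ring
    rw [this, emb_smul]
    rfl
  · by_cases hm : 1 ≤ m
    · -- positive case
      set G : ℕ × ℕ → VV := fun lk => FamF ST (m + n) p (fun lk => (-2 : ℂ) • DD f lk) lk with hG
      have hfinG : (Function.support G).Finite := by
        apply FamF_support_finite ST (m + n) p _ (f.support.sup wtN)
        intro lk hlk
        rw [DD_bound f lk hlk, smul_zero]
      have hstep : ∀ lk : ℕ × ℕ,
          emb (AstarBasis ((n : ℚ) + lk.1 - lk.2 + p - 1/2) ST) (p - 1) (g3 lk - DD h0 lk)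
            = if m.toNat ≤ lk.1 then G (lk.1 - m.toNat, lk.2) else 0 := by
        intro lk
        have hsub : g3 lk - DD h0 lk
            = if m.toNat ≤ lk.1 then (-2 : ℂ) • (dOp false (lk.1 - m.toNat) (cOp false lk.2 f)) else 0 := by
          simp only [hg3, hh0, if_neg hm0]
          exact comm_apply_pos m hm lk.1 lk.2 f
        rw [hsub]
        by_cases hml : m.toNat ≤ lk.1
        · rw [if_pos hml, if_pos hml]
          have harg : (n : ℚ) + lk.1 - lk.2 + p - 1/2
              = ((m + n : ℤ) : ℚ) + ((lk.1 - m.toNat : ℕ) : ℚ) - lk.2 + p - 1/2 := by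
            rw [Nat.cast_sub hml, toNat_cast_q m (by omega)]
            push_cast
            ring
          rw [harg]
          rfl
        · rw [if_neg hml, if_neg hml, emb_zero]
      rw [finsum_congr hstep, finsum_shift1 m.toNat G hfinG]
      apply finsum_congr
      intro lk
      rw [hG]
      show FamF ST (m+n) p _ lk = _
      rw [FamF, emb_smul]
      rfl
    · -- negative case
      have hm' : m ≤ -1 := by omega
      set G : ℕ × ℕ → VV := fun lk => FamF ST (m + n) p (fun lk => (-2 : ℂ) • DD f lk) lk with hG
      have hfinG : (Function.support G).Finite := by
        apply FamF_support_finite ST (m + n) p _ (f.support.sup wtN)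
        intro lk hlk
        rw [DD_bound f lk hlk, smul_zero]
      have hstep : ∀ lk : ℕ × ℕ,
          emb (AstarBasis ((n : ℚ) + lk.1 - lk.2 + p - 1/2) ST) (p - 1) (g3 lk - DD h0 lk)
            = if (-m).toNat ≤ lk.2 then G (lk.1, lk.2 - (-m).toNat) else 0 := by
        intro lk
        have hsub : g3 lk - DD h0 lk
            = if (-m).toNat ≤ lk.2 then (-2 : ℂ) • (dOp false lk.1 (cOp false (lk.2 - (-m).toNat) f)) else 0 := by
          simp only [hg3, hh0, if_neg hm0]
          exact comm_apply_neg m hm' lk.1 lk.2 f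
        rw [hsub]
        by_cases hml : (-m).toNat ≤ lk.2
        · rw [if_pos hml, if_pos hml]
          have harg : (n : ℚ) + lk.1 - lk.2 + p - 1/2
              = ((m + n : ℤ) : ℚ) + (lk.1 : ℚ) - ((lk.2 - (-m).toNat : ℕ) : ℚ) + p - 1/2 := by
            rw [Nat.cast_sub hml, toNat_cast_q (-m) (by omega)]
            push_cast
            ring
          rw [harg]
          rfl
        · rw [if_neg hml, if_neg hml, emb_zero]
      rw [finsum_congr hstep, finsum_shift2 (-m).toNat G hfinG]
      apply finsum_congr
      intro lk
      rw [hG]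
      show FamF ST (m+n) p _ lk = _
      rw [FamF, emb_smul]
      rfl

end PartE

theorem statement8' (m n : ℤ) (u : VV) :
    HVop m (Yop n u) - Yop n (HVop m u) = (-2 : ℂ) • Yop (m + n) u := by
  induction u using Finsupp.induction with
  | zero => rw [Yop_zero, HVop_zero, Yop_zero, Yop_zero, smul_zero, sub_zero]
  | single_add STp f u hSTp hf ih =>
    rw [Yop_add, HVop_add, HVop_add, Yop_add, Yop_add, smul_add, add_sub_add_comm]
    obtain ⟨ST, p⟩ := STp
    rw [key_single m n ST p f, ih]
theorem statement8 (m n : ℤ) (u : VV) :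
    HVop m (Yop n u) - Yop n (HVop m u) = (-2 : ℂ) • Yop (m + n) u := by
  exact statement8' m n u
end
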